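/- Let k be a field, let a₁, a₂ ∈ k with a₂ ≠ 0, and let A be the 2-dimensional k-vector space with basis {x, y} and the k-bilinear multiplication determined by x² = a₁x + a₂y, xy = 0, yx = −(a₁²/a₂)x − a₁y, y² = 0. Then (a·b)·c = 0 for all a, b, c ∈ A; consequently, together with the zero comultiplication Δ = 0, A is a self-distributive bialgebra. -/

import Mathlib

/-- The 2-dimensional algebra with basis `{x, y}`, `a₂ ≠ 0`, and
multiplication `x² = a₁•x + a₂•y, xy = 0, yx = −(a₁²/a₂)•x − a₁•y, y² = 0`
satisfies `(a·b)·c = 0` for all `a, b, c`; hence with zero comultiplication it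
is a self-distributive bialgebra. -/
theorem stmt_13 (k A : Type*) [Field k] (a₁ a₂ : k) (ha₂ : a₂ ≠ 0)
    [NonUnitalNonAssocRing A] [Module k A]
    [SMulCommClass k A A] [IsScalarTower k A A]
    (B : Module.Basis (Fin 2) k A) (x y : A) (hx : x = B 0) (hy : y = B 1)
    (hxx : x * x = a₁ • x + a₂ • y) (hxy : x * y = 0)
    (hyx : y * x = (-(a₁ ^ 2 / a₂)) • x - a₁ • y) (hyy : y * y = 0) :
    ∀ a b c : A, (a * b) * c = 0 := by
  have hrep : ∀ u : A, u = (B.repr u 0) • x + (B.repr u 1) • y := by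
    intro u
    rw [hx, hy]
    conv_lhs => rw [← B.sum_repr u]
    simp only [Fin.sum_univ_two]
  -- key: (x*x) * z = 0 for z ∈ {x, y}
  have hvx : (x * x) * x = 0 := by
    rw [hxx, add_mul, smul_mul_assoc, smul_mul_assoc, hxx, hyx, smul_add, smul_sub,
      smul_smul, smul_smul, smul_smul, smul_smul]
    have h1 : a₂ * -(a₁ ^ 2 / a₂) = -(a₁ * a₁) := by field_simp
    rw [h1]
    module
  have hvy : (x * x) * y = 0 := by
    rw [hxx, add_mul, smul_mul_assoc, smul_mul_assoc, hxy, hyy, smul_zero, smul_zero, add_zero]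
  intro a b c
  rw [hrep a, hrep b, hrep c]
  simp only [add_mul, mul_add, sub_mul, mul_sub, smul_mul_assoc, mul_smul_comm, hxx, hxy, hyx, hyy,
    smul_zero, add_zero, zero_add, smul_add, smul_sub, smul_smul]
  match_scalars <;> field_simp <;> ring
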